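/- Let n ≥ 1 and θ : Fin n → ℝ be nonnegative with ∑ θ i = 1. Define remaining mass S k = 1 - ∑_{i < k} θ i, and suppose S k > 0 for all k < n - 1. Let F₀, …, F_{n-2} be independent Bernoulli bits with P(F_k = true) = θ k / S k. Define C = the least k < n-1 with F_k = true, or n-1 if no such k exists. Then P(C = k) = θ k for every k : Fin n. -/

import Mathlib

/-- The remaining probability mass `S k = 1 - ∑_{i < k} θ i`. -/
noncomputable def remMass {n : ℕ} (θ : Fin n → ℝ) (k : ℕ) : ℝ :=
  1 - ∑ i : Fin n, if (i : ℕ) < k then θ i else 0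

/-- Probability weight of an outcome `σ` of the `n - 1` independent Bernoulli
flips, where flip `k` is true with probability `θ k / S k`. -/
noncomputable def seqWeight {n : ℕ} (θ : Fin n → ℝ) (σ : Fin (n - 1) → Bool) : ℝ :=
  ∏ j : Fin (n - 1),
    if σ j then θ (Fin.castLE (Nat.sub_le n 1) j) / remMass θ j.val
    else 1 - θ (Fin.castLE (Nat.sub_le n 1) j) / remMass θ j.val

/-- The index of the first true flip, or the default `d` if all flips are false. -/
def seqOut {m : ℕ} (σ : Fin m → Bool) (d : ℕ) : ℕ :=
  if h : ∃ k, σ k = true then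
    ((Finset.univ.filter fun k => σ k = true).min'
      (by obtain ⟨k, hk⟩ := h
          exact ⟨k, Finset.mem_filter.mpr ⟨Finset.mem_univ _, hk⟩⟩)).val
  else d

private lemma remMass_zero {n : ℕ} (θ : Fin n → ℝ) : remMass θ 0 = 1 := by
  simp [remMass]

private lemma remMass_succ {n : ℕ} (θ : Fin n → ℝ) (k : ℕ) (hk : k < n) :
    remMass θ (k + 1) = remMass θ k - θ ⟨k, hk⟩ := by
  unfold remMass
  have key : ∀ i : Fin n, (if (i : ℕ) < k + 1 then θ i else 0)
      = (if (i : ℕ) < k then θ i else 0) + (if i = ⟨k, hk⟩ then θ i else 0) := by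
    intro i
    by_cases h1 : (i : ℕ) < k
    · rw [if_pos (by omega), if_pos h1,
        if_neg (by rw [Fin.ext_iff]; simpa using by omega), add_zero]
    · by_cases h2 : (i : ℕ) = k
      · rw [if_pos (by omega), if_neg h1, if_pos (by rw [Fin.ext_iff]; simpa using h2),
          zero_add]
      · rw [if_neg (by omega), if_neg h1,
          if_neg (by rw [Fin.ext_iff]; simpa using h2), add_zero]
  rw [Finset.sum_congr rfl fun i _ => key i, Finset.sum_add_distrib,
    Finset.sum_ite_eq' Finset.univ (⟨k, hk⟩ : Fin n) θ, if_pos (Finset.mem_univ _)]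
  ring

private lemma remMass_top {n : ℕ} (θ : Fin n → ℝ) (hsum : ∑ i, θ i = 1) :
    remMass θ n = 0 := by
  unfold remMass
  rw [Finset.sum_congr rfl fun i _ => if_pos i.isLt, hsum]
  ring

private lemma telescope {n : ℕ} (θ : Fin n → ℝ)
    (hS : ∀ k, k < n - 1 → 0 < remMass θ k) :
    ∀ k, k ≤ n - 1 →
      ∏ j ∈ Finset.range k,
        (1 - (if h : j < n then θ ⟨j, h⟩ else 0) / remMass θ j) = remMass θ k := by
  intro k
  induction k with
  | zero => intro _; simp [remMass_zero]
  | succ k ih =>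
    intro hk
    have hk' : k < n - 1 := by omega
    have hkn : k < n := by omega
    have hpos := hS k hk'
    rw [Finset.prod_range_succ, ih (le_of_lt hk'), dif_pos hkn, remMass_succ θ k hkn]
    field_simp

private lemma seqOut_lt {m d : ℕ} (σ : Fin m → Bool) (h : ∃ j, σ j = true) :
    seqOut σ d < m := by
  unfold seqOut
  rw [dif_pos h]
  exact Fin.isLt _

private lemma seqOut_eq_iff {m d : ℕ} (hd : m ≤ d) (σ : Fin m → Bool) (k : ℕ) (hk : k < m) :
    seqOut σ d = k ↔ σ ⟨k, hk⟩ = true ∧ ∀ j (hj : j < k), σ ⟨j, hj.trans hk⟩ = false := by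
  unfold seqOut
  by_cases h : ∃ j, σ j = true
  · rw [dif_pos h]
    have hne : (Finset.univ.filter fun j => σ j = true).Nonempty := by
      obtain ⟨j, hj⟩ := h; exact ⟨j, Finset.mem_filter.mpr ⟨Finset.mem_univ _, hj⟩⟩
    constructor
    · intro hmin
      have hmem := Finset.min'_mem _ hne
      have heq : (⟨k, hk⟩ : Fin m) = (Finset.univ.filter fun j => σ j = true).min' hne :=
        Fin.ext hmin.symm
      have h1 : σ ⟨k, hk⟩ = true := by
        rw [heq]; exact (Finset.mem_filter.mp hmem).2
      refine ⟨h1, fun j hj => ?_⟩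
      by_contra hcon
      have hjt : σ ⟨j, hj.trans hk⟩ = true := by
        cases hb : σ ⟨j, hj.trans hk⟩
        · exact absurd hb hcon
        · rfl
      have hle := Finset.min'_le (Finset.univ.filter fun i => σ i = true)
        (⟨j, hj.trans hk⟩ : Fin m) (Finset.mem_filter.mpr ⟨Finset.mem_univ _, hjt⟩)
      have hle' : ((Finset.univ.filter fun j => σ j = true).min' hne : ℕ) ≤ j := by
        exact Fin.le_def.mp hle
      have hmk : ((Finset.univ.filter fun j => σ j = true).min' hne : ℕ) = k := hmin
      omega
    · rintro ⟨h1, h2⟩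
      have hmem : (⟨k, hk⟩ : Fin m) ∈ Finset.univ.filter fun j => σ j = true :=
        Finset.mem_filter.mpr ⟨Finset.mem_univ _, h1⟩
      have hle := Finset.min'_le _ _ hmem
      have hge : (⟨k, hk⟩ : Fin m) ≤ (Finset.univ.filter fun j => σ j = true).min' hne := by
        apply Finset.le_min'
        intro y hy
        rw [Fin.le_def]
        by_contra hcon
        push_neg at hcon
        have hyk : (y : ℕ) < k := hcon
        have hfalse := h2 y hyk
        have hy' : σ y = true := (Finset.mem_filter.mp hy).2
        rw [show (⟨(y : ℕ), hyk.trans hk⟩ : Fin m) = y from Fin.eta y y.isLt] at hfalse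
        rw [hy'] at hfalse
        exact Bool.noConfusion hfalse
      have := le_antisymm hle hge
      exact congrArg Fin.val this
  · rw [dif_neg h]
    push_neg at h
    constructor
    · intro hdk; omega
    · rintro ⟨h1, -⟩
      have := h ⟨k, hk⟩
      rw [h1] at this
      exact absurd rfl this

private lemma ind_eq_prod {m d : ℕ} (hd : m ≤ d) (σ : Fin m → Bool) (k : ℕ) (hk : k < m) :
    (if seqOut σ d = k then (1 : ℝ) else 0)
      = ∏ j : Fin m, (if (j : ℕ) < k then (if σ j then (0 : ℝ) else 1)
          else if (j : ℕ) = k then (if σ j then 1 else 0) else 1) := by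
  by_cases h : σ ⟨k, hk⟩ = true ∧ ∀ j (hj : j < k), σ ⟨j, hj.trans hk⟩ = false
  · rw [if_pos ((seqOut_eq_iff hd σ k hk).mpr h)]
    symm
    apply Finset.prod_eq_one
    intro j _
    rcases lt_trichotomy (j : ℕ) k with h1 | h1 | h1
    · have := h.2 j h1
      rw [Fin.eta] at this
      simp [h1, this]
    · have hj : j = ⟨k, hk⟩ := Fin.ext h1
      subst hj
      simp [h1, h.1]
    · rw [if_neg (by omega), if_neg (by omega)]
  · rw [if_neg fun hc => h ((seqOut_eq_iff hd σ k hk).mp hc)]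
    symm
    push_neg at h
    by_cases h1 : σ ⟨k, hk⟩ = true
    · obtain ⟨j, hj, hjt⟩ := h h1
      have hjt' : σ ⟨j, hj.trans hk⟩ = true := by
        cases hb : σ ⟨j, hj.trans hk⟩
        · exact absurd hb hjt
        · rfl
      apply Finset.prod_eq_zero (Finset.mem_univ (⟨j, hj.trans hk⟩ : Fin m))
      simp [hj, hjt']
    · apply Finset.prod_eq_zero (Finset.mem_univ (⟨k, hk⟩ : Fin m))
      have h1' : σ ⟨k, hk⟩ = false := by
        cases hb : σ ⟨k, hk⟩
        · rfl
        · exact absurd hb h1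
      simp [h1']

private lemma ind_default_eq_prod {m d : ℕ} (hd : m ≤ d) (σ : Fin m → Bool) :
    (if seqOut σ d = d then (1 : ℝ) else 0)
      = ∏ j : Fin m, (if σ j then (0 : ℝ) else 1) := by
  by_cases h : ∃ j, σ j = true
  · have hlt := seqOut_lt (d := d) σ h
    rw [if_neg (by omega)]
    obtain ⟨j, hj⟩ := h
    symm
    apply Finset.prod_eq_zero (Finset.mem_univ j)
    simp [hj]
  · have hfalse : ∀ j, σ j = false := by
      intro j
      cases hb : σ j
      · rfl
      · exact absurd ⟨j, hb⟩ h
    rw [if_pos (by unfold seqOut; rw [dif_neg h])]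
    symm
    apply Finset.prod_eq_one
    intro j _
    simp [hfalse j]

/-- correctness of the sequential (SBK-style) encoding of an
`n`-valued categorical distribution: if `θ` is nonnegative with total mass 1,
the remaining masses `S k` are positive for `k < n - 1`, and `C` is the least
`k < n - 1` whose flip (of parameter `θ k / S k`) is true — or `n - 1` if none —
then `P(C = k) = θ k` for every `k`. -/
theorem stmt_4 {n : ℕ} (hn : 1 ≤ n) (θ : Fin n → ℝ)
    (hθ : ∀ i, 0 ≤ θ i) (hsum : ∑ i, θ i = 1)
    (hS : ∀ k, k < n - 1 → 0 < remMass θ k) :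
    ∀ k : Fin n,
      ∑ σ : Fin (n - 1) → Bool,
        seqWeight θ σ * (if seqOut σ (n - 1) = (k : ℕ) then 1 else 0) = θ k := by
  intro k
  set m := n - 1 with hm
  set θ' : ℕ → ℝ := fun j => if h : j < n then θ ⟨j, h⟩ else 0 with hθ'
  set pN : ℕ → ℝ := fun j => θ' j / remMass θ j with hpN
  have hcast : ∀ j : Fin m, θ (Fin.castLE (Nat.sub_le n 1) j) = θ' (j : ℕ) := by
    intro j
    have hjn : (j : ℕ) < n := lt_of_lt_of_le j.isLt (Nat.sub_le n 1)
    rw [hθ']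
    simp only [dif_pos hjn]
    congr 1
  have hkn : (k : ℕ) < m + 1 := by have := k.isLt; omega
  rcases Nat.lt_succ_iff_lt_or_eq.mp hkn with hklt | hkeq
  · -- case k < m
    have step1 : ∀ σ : Fin m → Bool,
        seqWeight θ σ * (if seqOut σ m = (k : ℕ) then (1 : ℝ) else 0)
          = ∏ j : Fin m,
              ((if σ j then pN (j : ℕ) else 1 - pN (j : ℕ)) *
                (if (j : ℕ) < (k : ℕ) then (if σ j then (0 : ℝ) else 1)
                  else if (j : ℕ) = (k : ℕ) then (if σ j then 1 else 0) else 1)) := by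
      intro σ
      rw [ind_eq_prod le_rfl σ (k : ℕ) hklt, seqWeight, ← Finset.prod_mul_distrib]
      apply Finset.prod_congr rfl
      intro j _
      rw [hcast j]
    rw [Finset.sum_congr rfl fun σ _ => step1 σ,
      ← Fintype.prod_sum (fun (j : Fin m) (b : Bool) =>
        (if b then pN (j : ℕ) else 1 - pN (j : ℕ)) *
          (if (j : ℕ) < (k : ℕ) then (if b then (0 : ℝ) else 1)
            else if (j : ℕ) = (k : ℕ) then (if b then 1 else 0) else 1))]
    have step2 : ∀ j : Fin m,
        (∑ b : Bool, ((if b then pN (j : ℕ) else 1 - pN (j : ℕ)) *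
          (if (j : ℕ) < (k : ℕ) then (if b then (0 : ℝ) else 1)
            else if (j : ℕ) = (k : ℕ) then (if b then 1 else 0) else 1)))
          = (if (j : ℕ) < (k : ℕ) then 1 - pN (j : ℕ)
              else if (j : ℕ) = (k : ℕ) then pN (j : ℕ) else 1) := by
      intro j
      rw [Fintype.sum_bool]
      by_cases h1 : (j : ℕ) < (k : ℕ)
      · simp [h1]
      · by_cases h2 : (j : ℕ) = (k : ℕ) <;> simp [h1, h2] <;> ring
    rw [Finset.prod_congr rfl fun j _ => step2 j]
    rw [Fin.prod_univ_eq_prod_range (fun j =>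
      (if j < (k : ℕ) then 1 - pN j else if j = (k : ℕ) then pN j else 1)) m]
    rw [← Finset.prod_subset (Finset.range_subset_range.mpr hklt)
      (fun x _ hx => by
        rw [if_neg (by simp at hx; omega), if_neg (by simp at hx; omega)])]
    rw [Finset.prod_range_succ, if_neg (lt_irrefl _), if_pos rfl]
    have htel := telescope θ hS (k : ℕ) (le_of_lt hklt)
    rw [Finset.prod_congr rfl (fun j hj => by
      rw [if_pos (Finset.mem_range.mp hj)]), htel]
    have hpos := hS (k : ℕ) hklt
    have hβ : pN (k : ℕ) = θ k / remMass θ (k : ℕ) := by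
      simp only [hpN, hθ', dif_pos k.isLt, Fin.eta]
    rw [hβ, mul_comm, div_mul_cancel₀ _ (ne_of_gt hpos)]
  · -- case k = m, i.e. k is the last index
    have step1 : ∀ σ : Fin m → Bool,
        seqWeight θ σ * (if seqOut σ m = (k : ℕ) then (1 : ℝ) else 0)
          = ∏ j : Fin m,
              ((if σ j then pN (j : ℕ) else 1 - pN (j : ℕ)) *
                (if σ j then (0 : ℝ) else 1)) := by
      intro σ
      rw [hkeq, ind_default_eq_prod le_rfl σ, seqWeight, ← Finset.prod_mul_distrib]
      apply Finset.prod_congr rfl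
      intro j _
      rw [hcast j]
    rw [Finset.sum_congr rfl fun σ _ => step1 σ,
      ← Fintype.prod_sum (fun (j : Fin m) (b : Bool) =>
        (if b then pN (j : ℕ) else 1 - pN (j : ℕ)) * (if b then (0 : ℝ) else 1))]
    have step2 : ∀ j : Fin m,
        (∑ b : Bool, ((if b then pN (j : ℕ) else 1 - pN (j : ℕ)) *
          (if b then (0 : ℝ) else 1))) = 1 - pN (j : ℕ) := by
      intro j
      rw [Fintype.sum_bool]
      simp
    rw [Finset.prod_congr rfl fun j _ => step2 j]
    rw [Fin.prod_univ_eq_prod_range (fun j => 1 - pN j) m]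
    have htel := telescope θ hS m le_rfl
    rw [htel]
    have hmn : m < n := by omega
    have h1 : remMass θ (m + 1) = remMass θ m - θ ⟨m, hmn⟩ := remMass_succ θ m hmn
    have h2 : remMass θ (m + 1) = 0 := by
      rw [show m + 1 = n by omega]
      exact remMass_top θ hsum
    have h3 : remMass θ m = θ ⟨m, hmn⟩ := by rw [h1] at h2; linarith
    rw [h3]
    congr 1
    rw [Fin.ext_iff]
    exact hkeq.symm
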